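/- Define φ : ℝ³ → ℝ⁶ by φ(x,y,z) = (1/√3)·(cos(√3·x), sin(√3·x), cos(√3·y), sin(√3·y), cos(√3·z), sin(√3·z)) and let X = {(x,y,z) ∈ ℝ³ : x + y + z = 0}. Then √3 is the maximum of ‖φ(p) − φ(q)‖ over p, q ∈ X: for all p, q ∈ X one has ‖φ(p) − φ(q)‖ ≤ √3, and there exist p, q ∈ X with ‖φ(p) − φ(q)‖ = √3. That is, the extrinsic diameter of the immersed flat 2-torus φ(X) ⊂ ℝ⁶ equals √3. -/

import Mathlib

open Real
/-- The map `φ : ℝ³ → ℝ⁶`,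
`φ(x,y,z) = (1/√3)(cos(√3 x), sin(√3 x), cos(√3 y), sin(√3 y), cos(√3 z), sin(√3 z))`,
whose image is the Clifford torus in `S⁵ ⊂ ℝ⁶`. -/
noncomputable def cliffordMap : EuclideanSpace ℝ (Fin 3) → EuclideanSpace ℝ (Fin 6) :=
  fun v => (WithLp.equiv 2 (Fin 6 → ℝ)).symm
    ![(1 / Real.sqrt 3) * Real.cos (Real.sqrt 3 * v 0),
      (1 / Real.sqrt 3) * Real.sin (Real.sqrt 3 * v 0),
      (1 / Real.sqrt 3) * Real.cos (Real.sqrt 3 * v 1),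
      (1 / Real.sqrt 3) * Real.sin (Real.sqrt 3 * v 1),
      (1 / Real.sqrt 3) * Real.cos (Real.sqrt 3 * v 2),
      (1 / Real.sqrt 3) * Real.sin (Real.sqrt 3 * v 2)]

lemma pair_sq (a b : ℝ) :
    ((1/Real.sqrt 3) * Real.cos a - (1/Real.sqrt 3) * Real.cos b)^2
      + ((1/Real.sqrt 3) * Real.sin a - (1/Real.sqrt 3) * Real.sin b)^2
      = (2 - 2 * Real.cos (a - b)) / 3 := by
  have h3 : Real.sqrt 3 * Real.sqrt 3 = 3 := Real.mul_self_sqrt (by norm_num)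
  have h0 : Real.sqrt 3 ≠ 0 := by positivity
  have hc := Real.cos_sub a b
  have hs1 := Real.sin_sq_add_cos_sq a
  have hs2 := Real.sin_sq_add_cos_sq b
  field_simp
  nlinarith [hs1, hs2, hc]

lemma norm_sq_formula (p q : EuclideanSpace ℝ (Fin 3)) :
    ‖cliffordMap p - cliffordMap q‖^2 =
      2 - (2/3) * (Real.cos (Real.sqrt 3 * p 0 - Real.sqrt 3 * q 0)
        + Real.cos (Real.sqrt 3 * p 1 - Real.sqrt 3 * q 1)
        + Real.cos (Real.sqrt 3 * p 2 - Real.sqrt 3 * q 2)) := by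
  rw [EuclideanSpace.norm_eq, Real.sq_sqrt (by positivity)]
  simp only [cliffordMap, Fin.sum_univ_succ, Finset.sum_empty, Fin.sum_univ_zero,
    WithLp.equiv_symm_apply, PiLp.toLp_apply, PiLp.sub_apply, Real.norm_eq_abs, sq_abs,
    Matrix.cons_val_zero, Matrix.cons_val_succ, Fin.succ_zero_eq_one]
  have e0 := pair_sq (Real.sqrt 3 * p 0) (Real.sqrt 3 * q 0)
  have e1 := pair_sq (Real.sqrt 3 * p 1) (Real.sqrt 3 * q 1)
  have e2 := pair_sq (Real.sqrt 3 * p 2) (Real.sqrt 3 * q 2)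
  linarith

lemma cos_key (a b : ℝ) : -(3/2) ≤ Real.cos a + Real.cos b + Real.cos (a + b) := by
  have h1 : Real.cos a + Real.cos b
      = 2 * Real.cos ((a+b)/2) * Real.cos ((a-b)/2) := Real.cos_add_cos a b
  have h2 : Real.cos ((a+b)/2) ^ 2 = 1/2 + Real.cos (a+b) / 2 := by
    have := Real.cos_sq ((a+b)/2)
    rwa [show 2*((a+b)/2) = a+b by ring] at this
  have h3 : Real.cos ((a-b)/2) ^ 2 ≤ 1 := by
    nlinarith [Real.neg_one_le_cos ((a-b)/2), Real.cos_le_one ((a-b)/2)]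
  nlinarith [sq_nonneg (2 * Real.cos ((a+b)/2) + Real.cos ((a-b)/2))]

/-- On the plane `X = {(x,y,z) : x + y + z = 0}`, the extrinsic diameter of the
immersed flat 2-torus `φ(X) ⊂ ℝ⁶` equals `√3`: `‖φ p - φ q‖ ≤ √3` for all
`p, q ∈ X`, and the value `√3` is attained. -/
theorem cliffordTorus_extrinsic_diameter :
    (∀ p q : EuclideanSpace ℝ (Fin 3),
      p 0 + p 1 + p 2 = 0 → q 0 + q 1 + q 2 = 0 →
      ‖cliffordMap p - cliffordMap q‖ ≤ Real.sqrt 3) ∧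
    (∃ p q : EuclideanSpace ℝ (Fin 3),
      p 0 + p 1 + p 2 = 0 ∧ q 0 + q 1 + q 2 = 0 ∧
      ‖cliffordMap p - cliffordMap q‖ = Real.sqrt 3) := by
  constructor
  · intro p q hp hq
    set a := Real.sqrt 3 * p 0 - Real.sqrt 3 * q 0 with ha
    set b := Real.sqrt 3 * p 1 - Real.sqrt 3 * q 1 with hb
    have h2 : Real.sqrt 3 * p 2 - Real.sqrt 3 * q 2 = -(a + b) := by
      have : p 2 = -(p 0 + p 1) := by linarith
      have : q 2 = -(q 0 + q 1) := by linarith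
      rw [ha, hb]; linear_combination Real.sqrt 3 * hp - Real.sqrt 3 * hq
    have hns := norm_sq_formula p q
    rw [h2, Real.cos_neg] at hns
    have hk := cos_key a b
    have hsq : ‖cliffordMap p - cliffordMap q‖^2 ≤ 3 := by rw [hns]; linarith
    have := Real.sqrt_le_sqrt hsq
    rwa [Real.sqrt_sq (norm_nonneg _)] at this
  · refine ⟨(WithLp.equiv 2 (Fin 3 → ℝ)).symm
      ![2*π/(3*Real.sqrt 3), 2*π/(3*Real.sqrt 3), -(4*π/(3*Real.sqrt 3))], 0, ?_, ?_, ?_⟩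
    · simp [WithLp.equiv_symm_apply, PiLp.toLp_apply]; ring
    · simp
    · set p : EuclideanSpace ℝ (Fin 3) := (WithLp.equiv 2 (Fin 3 → ℝ)).symm
        ![2*π/(3*Real.sqrt 3), 2*π/(3*Real.sqrt 3), -(4*π/(3*Real.sqrt 3))] with hp
      have h0 : Real.sqrt 3 ≠ 0 := by positivity
      have h3 : Real.sqrt 3 * Real.sqrt 3 = 3 := Real.mul_self_sqrt (by norm_num)
      have hns := norm_sq_formula p (0 : EuclideanSpace ℝ (Fin 3))
      have hp0 : p 0 = 2*π/(3*Real.sqrt 3) := rfl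
      have hp1 : p 1 = 2*π/(3*Real.sqrt 3) := rfl
      have hp2 : p 2 = -(4*π/(3*Real.sqrt 3)) := rfl
      have hq0 : (0 : EuclideanSpace ℝ (Fin 3)) 0 = 0 := rfl
      have hq1 : (0 : EuclideanSpace ℝ (Fin 3)) 1 = 0 := rfl
      have hq2 : (0 : EuclideanSpace ℝ (Fin 3)) 2 = 0 := rfl
      rw [hp0, hp1, hp2, hq0, hq1, hq2] at hns
      have e1 : Real.sqrt 3 * (2*π/(3*Real.sqrt 3)) - Real.sqrt 3 * 0 = 2*π/3 := by
        field_simp; ring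
      have e2 : Real.sqrt 3 * (-(4*π/(3*Real.sqrt 3))) - Real.sqrt 3 * 0 = -(4*π/3) := by
        field_simp; ring
      rw [e1, e2] at hns
      have c1 : Real.cos (2*π/3) = -(1/2) := by
        have : (2*π/3 : ℝ) = π - π/3 := by ring
        rw [this, Real.cos_pi_sub, Real.cos_pi_div_three]
      have c2 : Real.cos (-(4*π/3)) = -(1/2) := by
        rw [Real.cos_neg]
        have : (4*π/3 : ℝ) = π/3 + π := by ring
        rw [this, Real.cos_add_pi, Real.cos_pi_div_three]
      rw [c1, c2] at hns
      have hval : ‖cliffordMap p - cliffordMap (0 : EuclideanSpace ℝ (Fin 3))‖^2 = 3 := by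
        rw [hns]; ring
      have := congrArg Real.sqrt hval
      rwa [Real.sqrt_sq (norm_nonneg _)] at this
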